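/- In the braid group B₄ (the group presented by generators σ₁, σ₂, σ₃ subject to the relations σᵢσᵢ₊₁σᵢ = σᵢ₊₁σᵢσᵢ₊₁ for i = 1, 2 and σ₁σ₃ = σ₃σ₁), the element σ₁⁻¹σ₂σ₃⁻¹ is conjugate to the element σ₂σ₁⁻¹σ₂⁻¹σ₂⁻¹σ₃. -/

import Mathlib

/-- Relations of the braid group `B₄` on generators `σ₁, σ₂, σ₃` (indexed `0,1,2`):
`σ₁σ₂σ₁ = σ₂σ₁σ₂`, `σ₂σ₃σ₂ = σ₃σ₂σ₃`, `σ₁σ₃ = σ₃σ₁`. -/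
def braidRels4 : Set (FreeGroup (Fin 3)) :=
  { FreeGroup.of 0 * FreeGroup.of 1 * FreeGroup.of 0 *
      (FreeGroup.of 1 * FreeGroup.of 0 * FreeGroup.of 1)⁻¹,
    FreeGroup.of 1 * FreeGroup.of 2 * FreeGroup.of 1 *
      (FreeGroup.of 2 * FreeGroup.of 1 * FreeGroup.of 2)⁻¹,
    FreeGroup.of 0 * FreeGroup.of 2 * (FreeGroup.of 2 * FreeGroup.of 0)⁻¹ }

/-- The braid group `B₄` as a presented group. -/
def B4 : Type := PresentedGroup braidRels4

noncomputable instance : Group B4 := by unfold B4; infer_instance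

/-- The generator `σᵢ₊₁` of `B₄` (so `σ 0 = σ₁`, `σ 1 = σ₂`, `σ 2 = σ₃`). -/
noncomputable def σ (i : Fin 3) : B4 := PresentedGroup.of i

lemma braid_rel_of_mem {r : FreeGroup (Fin 3)} (h : r ∈ braidRels4) :
    PresentedGroup.mk braidRels4 r = 1 := by
  have : r ∈ Subgroup.normalClosure braidRels4 := Subgroup.subset_normalClosure h
  exact (QuotientGroup.eq_one_iff r).mpr this

lemma rel2 : σ 1 * σ 2 * σ 1 = σ 2 * σ 1 * σ 2 := by
  have h := braid_rel_of_mem (r := FreeGroup.of 1 * FreeGroup.of 2 * FreeGroup.of 1 *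
      (FreeGroup.of 2 * FreeGroup.of 1 * FreeGroup.of 2)⁻¹)
    (by right; left; rfl)
  rw [map_mul, map_inv, map_mul, map_mul, map_mul, map_mul, mul_inv_eq_one] at h
  exact h

lemma rel3 : σ 0 * σ 2 = σ 2 * σ 0 := by
  have h := braid_rel_of_mem (r := FreeGroup.of 0 * FreeGroup.of 2 *
      (FreeGroup.of 2 * FreeGroup.of 0)⁻¹)
    (by right; right; rfl)
  rw [map_mul, map_inv, map_mul, map_mul, mul_inv_eq_one] at h
  exact h

/-- In `B₄`, the element `σ₁⁻¹σ₂σ₃⁻¹` is conjugate to `σ₂σ₁⁻¹σ₂⁻¹σ₂⁻¹σ₃`. -/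
theorem stmt_8 :
    IsConj ((σ 0)⁻¹ * σ 1 * (σ 2)⁻¹)
      (σ 1 * (σ 0)⁻¹ * (σ 1)⁻¹ * (σ 1)⁻¹ * σ 2) := by
  rw [isConj_iff]
  refine ⟨σ 1 * σ 2, ?_⟩
  set s := σ 0; set t := σ 1; set u := σ 2
  have hcomm : Commute s u := rel3
  have hc : u * s⁻¹ = s⁻¹ * u := hcomm.inv_left.eq.symm
  have h : u * (t * (u⁻¹ * (u⁻¹ * t⁻¹))) = t⁻¹ * (t⁻¹ * u) := by
    have key : t * (t * (u * (t * (u⁻¹ * (u⁻¹ * t⁻¹))))) = u := by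
      have e1 : t * (t * (u * (t * (u⁻¹ * (u⁻¹ * t⁻¹))))) =
          t * (t * u * t) * (u⁻¹ * (u⁻¹ * t⁻¹)) := by group
      rw [e1, rel2]
      have e2 : t * (u * t * u) * (u⁻¹ * (u⁻¹ * t⁻¹)) = t * u * t * (u⁻¹ * t⁻¹) := by group
      rw [e2, rel2]
      change u * t * u * (u⁻¹ * t⁻¹) = u; group
    calc u * (t * (u⁻¹ * (u⁻¹ * t⁻¹)))
        = t⁻¹ * (t⁻¹ * (t * (t * (u * (t * (u⁻¹ * (u⁻¹ * t⁻¹))))))) := by group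
      _ = t⁻¹ * (t⁻¹ * u) := by rw [key]
  calc t * u * (s⁻¹ * t * u⁻¹) * (t * u)⁻¹
      = t * (u * s⁻¹) * (t * (u⁻¹ * (u⁻¹ * t⁻¹))) := by group
    _ = t * s⁻¹ * (u * (t * (u⁻¹ * (u⁻¹ * t⁻¹)))) := by rw [hc]; group
    _ = t * s⁻¹ * (t⁻¹ * (t⁻¹ * u)) := by rw [h]
    _ = t * s⁻¹ * t⁻¹ * t⁻¹ * u := by group
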